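/- Let r, s > 0. If α, β ∈ ℝ³ satisfy |α| ≤ r and |β| ≤ s, and |Π| ≤ rs, then the point (α, β, α⊗β + ΠI) lies in the second lamination K^{2,Λ}_{r,s} of the normalized constraint set K_{r,s}. -/

import Mathlib

open Matrix

/-- The 3D Elsässer state space: `(z⁺, z⁻, M)`. -/
abbrev MHD3EState := (Fin 3 → ℝ) × (Fin 3 → ℝ) × Matrix (Fin 3) (Fin 3) ℝ

/-- The 3D MHD wave cone (Elsässer variables). -/
def Lambda3E : Set MHD3EState :=
  {p | ∃ ξ : Fin 3 → ℝ, ξ ≠ 0 ∧ ∃ c : ℝ,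
    p.2.2 *ᵥ ξ + c • p.1 = 0 ∧ p.2.2ᵀ *ᵥ ξ + c • p.2.1 = 0 ∧
    p.1 ⬝ᵥ ξ = 0 ∧ p.2.1 ⬝ᵥ ξ = 0}

/-- The Euclidean length of a vector in `ℝ³`. -/
noncomputable def elen (v : Fin 3 → ℝ) : ℝ := Real.sqrt (v ⬝ᵥ v)

/-- The normalized constraint set `K_{r,s}`. -/
def Krs (r s : ℝ) : Set MHD3EState :=
  {p | elen p.1 = r ∧ elen p.2.1 = s ∧ ∃ Pi0 : ℝ, |Pi0| ≤ r * s ∧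
    p.2.2 = vecMulVec p.1 p.2.1 + Pi0 • (1 : Matrix (Fin 3) (Fin 3) ℝ)}

/-- The iterated laminates `K^{N,Λ}_{r,s}`. -/
def lamIterRS (r s : ℝ) : ℕ → Set MHD3EState
  | 0 => Krs r s
  | N + 1 => lamIterRS r s N ∪
      {p | ∃ l : ℝ, l ∈ Set.Icc (0 : ℝ) 1 ∧ ∃ V ∈ lamIterRS r s N, ∃ W ∈ lamIterRS r s N,
        V - W ∈ Lambda3E ∧ p = l • V + (1 - l) • W}


lemma elen_smul (a : ℝ) (v : Fin 3 → ℝ) : elen (a • v) = |a| * elen v := by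
  unfold elen
  rw [smul_dotProduct, dotProduct_smul, smul_eq_mul, smul_eq_mul, ← mul_assoc,
    Real.sqrt_mul (mul_self_nonneg a), Real.sqrt_mul_self_eq_abs]

lemma elen_neg (v : Fin 3 → ℝ) : elen (-v) = elen v := by
  unfold elen; rw [neg_dotProduct, dotProduct_neg, neg_neg]

lemma elen_nonneg (v : Fin 3 → ℝ) : 0 ≤ elen v := Real.sqrt_nonneg _

lemma unit_decomp (v : Fin 3 → ℝ) : ∃ f, elen f = 1 ∧ v = elen v • f := by
  by_cases h : v = 0
  · refine ⟨![1,0,0], ?_, ?_⟩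
    · simp [elen, dotProduct, Fin.sum_univ_three]
    · simp [h, elen, dotProduct]
  · have hdot : 0 < v ⬝ᵥ v := by
      rcases lt_or_eq_of_le (Finset.sum_nonneg (fun i _ => mul_self_nonneg (v i)) :
          (0:ℝ) ≤ v ⬝ᵥ v) with h1 | h1
      · exact h1
      · exfalso; apply h; funext i
        have := (Finset.sum_eq_zero_iff_of_nonneg
          (fun i _ => mul_self_nonneg (v i))).mp h1.symm i (Finset.mem_univ i)
        exact mul_self_eq_zero.mp this
    have hpos : 0 < elen v := Real.sqrt_pos.mpr hdot
    refine ⟨(elen v)⁻¹ • v, ?_, ?_⟩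
    · rw [elen_smul, abs_of_pos (inv_pos.mpr hpos), inv_mul_cancel₀ hpos.ne']
    · rw [smul_smul, mul_inv_cancel₀ hpos.ne', one_smul]

lemma exists_orth (e f : Fin 3 → ℝ) :
    ∃ ξ : Fin 3 → ℝ, ξ ≠ 0 ∧ e ⬝ᵥ ξ = 0 ∧ f ⬝ᵥ ξ = 0 := by
  set M : Matrix (Fin 2) (Fin 3) ℝ := ![e, f] with hM
  have hninj : ¬ Function.Injective M.mulVecLin := by
    intro h
    have := LinearMap.finrank_le_finrank_of_injective h
    simp [Module.finrank_pi] at this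
  have hker : LinearMap.ker M.mulVecLin ≠ ⊥ := fun hk => hninj (LinearMap.ker_eq_bot.mp hk)
  obtain ⟨ξ, hmem, hξ⟩ := Submodule.exists_mem_ne_zero_of_ne_bot hker
  have h0 : M *ᵥ ξ = 0 := hmem
  refine ⟨ξ, hξ, ?_, ?_⟩
  · have := congrFun h0 0
    simpa [hM, Matrix.mulVec] using this
  · have := congrFun h0 1
    simpa [hM, Matrix.mulVec] using this

lemma vecMulVec_mulVec' (u v ξ : Fin 3 → ℝ) : (vecMulVec u v) *ᵥ ξ = (v ⬝ᵥ ξ) • u := by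
  funext i
  simp [Matrix.mulVec, dotProduct, Matrix.vecMulVec_apply, Fin.sum_univ_three]
  ring

lemma vecMulVec_tr (u v : Fin 3 → ℝ) : (vecMulVec u v)ᵀ = vecMulVec v u := by
  ext i j; simp [Matrix.vecMulVec_apply, mul_comm]

lemma mem_Lambda3E' (u v a b : Fin 3 → ℝ) (ξ : Fin 3 → ℝ) (hξ : ξ ≠ 0)
    (hu : u ⬝ᵥ ξ = 0) (hv : v ⬝ᵥ ξ = 0) (ha : a ⬝ᵥ ξ = 0) (hb : b ⬝ᵥ ξ = 0) :
    ((a, b, vecMulVec u v) : MHD3EState) ∈ Lambda3E := by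
  refine ⟨ξ, hξ, 0, ?_, ?_, ha, hb⟩
  · simp [vecMulVec_mulVec', hv]
  · simp [vecMulVec_tr, vecMulVec_mulVec', hu]

lemma level1 (r s : ℝ) (hr : 0 < r) (hs : 0 < s) (β : Fin 3 → ℝ) (Pi0 : ℝ)
    (hβ : elen β ≤ s) (hPi : |Pi0| ≤ r * s) (e : Fin 3 → ℝ) (he : elen e = 1) :
    ((r • e, β, vecMulVec (r • e) β + Pi0 • (1 : Matrix (Fin 3) (Fin 3) ℝ)) : MHD3EState)
      ∈ lamIterRS r s 1 := by
  obtain ⟨f, hf, hβf⟩ := unit_decomp β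
  set b := elen β with hb
  have hb0 : 0 ≤ b := elen_nonneg β
  set V : MHD3EState := (r • e, s • f, vecMulVec (r • e) (s • f) + Pi0 • 1) with hV
  set W : MHD3EState := (r • e, -(s • f), vecMulVec (r • e) (-(s • f)) + Pi0 • 1) with hW
  have hre : elen (r • e) = r := by rw [elen_smul, he, abs_of_pos hr, mul_one]
  have hVK : V ∈ Krs r s := by
    refine ⟨hre, ?_, Pi0, hPi, rfl⟩
    rw [elen_smul, hf, abs_of_pos hs, mul_one]
  have hWK : W ∈ Krs r s := by
    refine ⟨hre, ?_, Pi0, hPi, rfl⟩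
    rw [elen_neg, elen_smul, hf, abs_of_pos hs, mul_one]
  obtain ⟨ξ, hξ, heξ, hfξ⟩ := exists_orth e f
  have hΛ : V - W ∈ Lambda3E := by
    have hVW : V - W = ((0 : Fin 3 → ℝ), (2*s) • f, vecMulVec (r • e) ((2*s) • f)) := by
      simp only [hV, hW, Prod.mk_sub_mk]
      refine Prod.ext ?_ (Prod.ext ?_ ?_)
      · simp
      · funext i; simp; ring
      · ext i j
        simp [Matrix.vecMulVec_apply, Matrix.one_apply]
        ring
    rw [hVW]
    refine mem_Lambda3E' (r • e) ((2*s) • f) _ _ ξ hξ ?_ ?_ ?_ ?_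
    · rw [smul_dotProduct, heξ, smul_zero]
    · rw [smul_dotProduct, hfξ, smul_zero]
    · simp
    · rw [smul_dotProduct, hfξ, smul_zero]
  set l : ℝ := (s + b) / (2 * s) with hl
  have hl0 : 0 ≤ l := by positivity
  have hl1 : l ≤ 1 := by rw [div_le_one (by positivity)]; linarith
  refine Or.inr ⟨l, ⟨hl0, hl1⟩, V, hVK, W, hWK, hΛ, ?_⟩
  have h2l : (2 * l - 1) * s = b := by
    rw [hl, show 2 * ((s + b) / (2 * s)) = (s + b) / s by ring, div_sub_one hs.ne',
      div_mul_cancel₀ _ hs.ne']; ring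
  have hss : s * s⁻¹ = 1 := mul_inv_cancel₀ hs.ne'
  simp only [hV, hW, Prod.smul_mk, Prod.mk_add_mk]
  refine Prod.ext ?_ (Prod.ext ?_ ?_)
  · funext i; simp; ring
  · funext i
    simp only [Pi.add_apply, Pi.smul_apply, Pi.neg_apply, smul_eq_mul]
    rw [hβf]
    simp only [Pi.smul_apply, smul_eq_mul, ← hb]
    linear_combination h2l * f i - (2*b*f i + 2*s*f i) * hss
  · ext i j
    simp only [Matrix.add_apply, Matrix.smul_apply, Matrix.vecMulVec_apply, Pi.smul_apply,
      Pi.neg_apply, smul_eq_mul, Matrix.one_apply]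
    rw [hβf]
    simp only [Pi.smul_apply, smul_eq_mul, ← hb]
    linear_combination (r * e i * f j) * h2l - (2*r*e i*b*f j + 2*r*e i*s*f j) * hss

/-- If `|α| ≤ r`, `|β| ≤ s` and `|Π| ≤ rs`, then `(α, β, α⊗β + ΠI)` lies in
the second laminate `K^{2,Λ}_{r,s}`. -/
theorem stmt14 (r s : ℝ) (hr : 0 < r) (hs : 0 < s) (α β : Fin 3 → ℝ) (Pi0 : ℝ)
    (hα : elen α ≤ r) (hβ : elen β ≤ s) (hPi : |Pi0| ≤ r * s) :
    ((α, β, vecMulVec α β + Pi0 • (1 : Matrix (Fin 3) (Fin 3) ℝ)) : MHD3EState)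
      ∈ lamIterRS r s 2 := by
  obtain ⟨e, he, hαe⟩ := unit_decomp α
  set a := elen α with ha
  have ha0 : 0 ≤ a := elen_nonneg α
  have hne : elen (-e) = 1 := by rw [elen_neg, he]
  set V : MHD3EState := (r • e, β, vecMulVec (r • e) β + Pi0 • 1) with hV
  set W : MHD3EState := (r • (-e), β, vecMulVec (r • (-e)) β + Pi0 • 1) with hW
  have hV1 : V ∈ lamIterRS r s 1 := level1 r s hr hs β Pi0 hβ hPi e he
  have hW1 : W ∈ lamIterRS r s 1 := level1 r s hr hs β Pi0 hβ hPi (-e) hne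
  obtain ⟨ξ, hξ, heξ, hβξ⟩ := exists_orth e β
  have hΛ : V - W ∈ Lambda3E := by
    have hVW : V - W = (((2*r) • e : Fin 3 → ℝ), (0 : Fin 3 → ℝ),
        vecMulVec ((2*r) • e) β) := by
      simp only [hV, hW, Prod.mk_sub_mk]
      refine Prod.ext ?_ (Prod.ext ?_ ?_)
      · funext i; simp; ring
      · simp
      · ext i j
        simp [Matrix.vecMulVec_apply, Matrix.one_apply]
        ring
    rw [hVW]
    refine mem_Lambda3E' ((2*r) • e) β _ _ ξ hξ ?_ hβξ ?_ ?_
    · rw [smul_dotProduct, heξ, smul_zero]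
    · rw [smul_dotProduct, heξ, smul_zero]
    · simp
  set l : ℝ := (r + a) / (2 * r) with hl
  have hl0 : 0 ≤ l := by positivity
  have hl1 : l ≤ 1 := by rw [div_le_one (by positivity)]; linarith
  have h2l : (2 * l - 1) * r = a := by
    rw [hl, show 2 * ((r + a) / (2 * r)) = (r + a) / r by ring, div_sub_one hr.ne',
      div_mul_cancel₀ _ hr.ne']; ring
  have hrr : r * r⁻¹ = 1 := mul_inv_cancel₀ hr.ne'
  refine Or.inr ⟨l, ⟨hl0, hl1⟩, V, hV1, W, hW1, hΛ, ?_⟩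
  simp only [hV, hW, Prod.smul_mk, Prod.mk_add_mk]
  refine Prod.ext ?_ (Prod.ext ?_ ?_)
  · funext i
    simp only [Pi.add_apply, Pi.smul_apply, Pi.neg_apply, smul_eq_mul]
    rw [hαe]
    simp only [Pi.smul_apply, smul_eq_mul, ← ha]
    linear_combination h2l * e i - (2*a*e i + 2*r*e i) * hrr
  · funext i
    simp only [Pi.add_apply, Pi.smul_apply, smul_eq_mul]
    ring
  · ext i j
    simp only [Matrix.add_apply, Matrix.smul_apply, Matrix.vecMulVec_apply, Pi.smul_apply,
      Pi.neg_apply, smul_eq_mul, Matrix.one_apply]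
    rw [hαe]
    simp only [Pi.smul_apply, smul_eq_mul, ← ha]
    linear_combination (e i * β j) * h2l - (2*a*e i*β j + 2*r*e i*β j) * hrr
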